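/- The pedal triangle of the first isodynamic point of a triangle is equilateral. -/

import Mathlib

open EuclideanGeometry Real

noncomputable section

abbrev Pt := EuclideanSpace ℝ (Fin 2)

/-- `S` is the first isodynamic point of triangle `ABC`: it lies on the three
Apollonius circles (e.g. the `A`-Apollonius circle is the locus of `P` with
`PB/PC = AB/AC`) and lies inside the circumcircle. -/
def IsFirstIsodynamic (A B C S : Pt) : Prop :=
  dist S B * dist A C = dist S C * dist A B ∧
  dist S A * dist B C = dist S C * dist B A ∧
  dist S A * dist C B = dist S B * dist C A ∧
  ∃ O r, dist O A = r ∧ dist O B = r ∧ dist O C = r ∧ dist O S < r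

local notation "⟪" x ", " y "⟫" => @inner ℝ _ _ x y

lemma inner_expand (x y : Pt) : ⟪x, y⟫ = x 0 * y 0 + x 1 * y 1 := by
  simp [PiLp.inner_apply, Fin.sum_univ_two, RCLike.inner_apply, mul_comm]

lemma dist_sq (x y : Pt) : dist x y ^ 2 = (x 0 - y 0) ^ 2 + (x 1 - y 1) ^ 2 := by
  rw [dist_eq_norm, ← real_inner_self_eq_norm_sq, inner_expand]
  simp only [PiLp.sub_apply]
  ring

lemma gram (s y z : Pt) :
    ⟪s, y⟫ ^ 2 * ⟪z, z⟫ + ⟪s, z⟫ ^ 2 * ⟪y, y⟫ - 2 * ⟪s, y⟫ * ⟪s, z⟫ * ⟪y, z⟫ =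
      ⟪s, s⟫ * (⟪y, y⟫ * ⟪z, z⟫ - ⟪y, z⟫ ^ 2) := by
  simp only [inner_expand]
  ring

lemma key_alg (a b c d e f : ℝ) (hc : c ≠ 0) (hd : d ≠ 0)
    (hgram : a ^ 2 * d + b ^ 2 * c - 2 * a * b * e = f * (c * d - e ^ 2)) :
    ((a / c) ^ 2 * c - 2 * (a / c) * (b / d) * e + (b / d) ^ 2 * d) * (c * d) =
      f * (c * d - e ^ 2) := by
  rw [← hgram]
  field_simp
  ring

lemma foot_eq {S P X Y : Pt} (hXY : X ≠ Y)
    (hcol : Collinear ℝ ({P, X, Y} : Set Pt))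
    (hperp : ⟪S - P, Y - X⟫ = 0) :
    P = X + (⟪S - X, Y - X⟫ / ⟪Y - X, Y - X⟫) • (Y - X) := by
  obtain ⟨v, hv⟩ := (collinear_iff_of_mem (show X ∈ ({P, X, Y} : Set Pt) by simp)).1 hcol
  obtain ⟨tP, htP⟩ := hv P (by simp)
  obtain ⟨tY, htY⟩ := hv Y (by simp)
  have htY0 : tY ≠ 0 := by
    rintro rfl
    simp at htY
    exact hXY htY.symm
  have hYX : Y - X = tY • v := by rw [htY]; simp [vadd_eq_add]
  have hPX : P - X = (tP / tY) • (Y - X) := by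
    rw [htP, hYX, smul_smul, div_mul_cancel₀ _ htY0]
    simp [vadd_eq_add]
  have key : ⟪S - X, Y - X⟫ = (tP / tY) * ⟪Y - X, Y - X⟫ := by
    have hsp : S - P = (S - X) - (tP / tY) • (Y - X) := by rw [← hPX]; abel
    rw [hsp, inner_sub_left, real_inner_smul_left] at hperp
    linarith
  have hne : ⟪Y - X, Y - X⟫ ≠ 0 := inner_self_ne_zero.2 (sub_ne_zero.2 hXY.symm)
  have hq : ⟪S - X, Y - X⟫ / ⟪Y - X, Y - X⟫ = tP / tY := by
    rw [key, mul_div_assoc, div_self hne, mul_one]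
  rw [hq, ← hPX]; abel

lemma pedal_side {S X Y Z P Q : Pt} (hXY : X ≠ Y) (hXZ : X ≠ Z)
    (hPc : Collinear ℝ ({P, X, Y} : Set Pt)) (hPp : ⟪S - P, Y - X⟫ = 0)
    (hQc : Collinear ℝ ({Q, X, Z} : Set Pt)) (hQp : ⟪S - Q, Z - X⟫ = 0) :
    dist P Q ^ 2 * (dist X Y ^ 2 * dist X Z ^ 2) =
      dist S X ^ 2 * (dist X Y ^ 2 * dist X Z ^ 2 - ⟪Y - X, Z - X⟫ ^ 2) := by
  set s := S - X with hs
  set y := Y - X with hy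
  set z := Z - X with hz
  have hy0 : y ≠ 0 := sub_ne_zero.2 hXY.symm
  have hz0 : z ≠ 0 := sub_ne_zero.2 hXZ.symm
  have hc : ⟪y, y⟫ ≠ 0 := inner_self_ne_zero.2 hy0
  have hd : ⟪z, z⟫ ≠ 0 := inner_self_ne_zero.2 hz0
  have hXY2 : dist X Y ^ 2 = ⟪y, y⟫ := by
    rw [dist_eq_norm', real_inner_self_eq_norm_sq]
  have hXZ2 : dist X Z ^ 2 = ⟪z, z⟫ := by
    rw [dist_eq_norm', real_inner_self_eq_norm_sq]
  have hSX2 : dist S X ^ 2 = ⟪s, s⟫ := by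
    rw [dist_eq_norm, real_inner_self_eq_norm_sq]
  have hPQ : dist P Q ^ 2 =
      (⟪s, y⟫ / ⟪y, y⟫) ^ 2 * ⟪y, y⟫ -
        2 * (⟪s, y⟫ / ⟪y, y⟫) * (⟪s, z⟫ / ⟪z, z⟫) * ⟪y, z⟫ +
        (⟪s, z⟫ / ⟪z, z⟫) ^ 2 * ⟪z, z⟫ := by
    rw [foot_eq hXY hPc hPp, foot_eq hXZ hQc hQp, dist_eq_norm, ← hs, ← hy, ← hz]
    have hdiff : (X + (⟪s, y⟫ / ⟪y, y⟫) • y) - (X + (⟪s, z⟫ / ⟪z, z⟫) • z) =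
        (⟪s, y⟫ / ⟪y, y⟫) • y - (⟪s, z⟫ / ⟪z, z⟫) • z := add_sub_add_left_eq_sub _ _ _
    rw [hdiff, ← real_inner_self_eq_norm_sq]
    simp only [inner_sub_left, inner_sub_right, real_inner_smul_left, real_inner_smul_right,
      real_inner_comm z y]
    ring
  rw [hPQ, hXY2, hXZ2, hSX2]
  exact key_alg _ _ _ _ _ _ hc hd (gram s y z)

lemma g_eq (A B C : Pt) :
    dist A B ^ 2 * dist A C ^ 2 - ⟪B - A, C - A⟫ ^ 2 =
      ((B 0 - A 0) * (C 1 - A 1) - (B 1 - A 1) * (C 0 - A 0)) ^ 2 := by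
  rw [dist_sq, dist_sq, inner_expand]
  simp only [PiLp.sub_apply]
  ring

lemma collinear_of_cross {A B C : Pt}
    (h : (B 0 - A 0) * (C 1 - A 1) - (B 1 - A 1) * (C 0 - A 0) = 0) :
    Collinear ℝ ({A, B, C} : Set Pt) := by
  rcases eq_or_ne B A with hBA | hBA
  · have hset : ({A, B, C} : Set Pt) = {A, C} := by rw [hBA]; simp [Set.insert_comm]
    rw [hset]; exact collinear_pair ℝ A C
  · have hcoord : B 0 - A 0 ≠ 0 ∨ B 1 - A 1 ≠ 0 := by
      by_contra hc
      push_neg at hc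
      apply hBA
      ext i
      fin_cases i
      · simpa [sub_eq_zero] using hc.1
      · simpa [sub_eq_zero] using hc.2
    obtain ⟨t, ht⟩ : ∃ t : ℝ, C - A = t • (B - A) := by
      rcases hcoord with h0 | h1
      · refine ⟨(C 0 - A 0) / (B 0 - A 0), ?_⟩
        ext i
        fin_cases i
        · simp only [PiLp.sub_apply, PiLp.smul_apply, smul_eq_mul, Fin.zero_eta, Fin.mk_one]
          field_simp
        · simp only [PiLp.sub_apply, PiLp.smul_apply, smul_eq_mul, Fin.zero_eta, Fin.mk_one]
          field_simp
          linear_combination h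
      · refine ⟨(C 1 - A 1) / (B 1 - A 1), ?_⟩
        ext i
        fin_cases i
        · simp only [PiLp.sub_apply, PiLp.smul_apply, smul_eq_mul, Fin.zero_eta, Fin.mk_one]
          field_simp
          linear_combination -h
        · simp only [PiLp.sub_apply, PiLp.smul_apply, smul_eq_mul, Fin.zero_eta, Fin.mk_one]
          field_simp
    rw [collinear_iff_of_mem (show A ∈ ({A, B, C} : Set Pt) by simp)]
    refine ⟨B - A, ?_⟩
    intro p hp
    rcases hp with rfl | rfl | rfl
    · exact ⟨0, by simp⟩
    · exact ⟨1, by simp⟩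
    · exact ⟨t, by rw [vadd_eq_add, ← ht]; abel⟩

theorem stmt12 (A B C S P Q R : Pt)
    (hABC : AffineIndependent ℝ ![A, B, C])
    (hS : IsFirstIsodynamic A B C S)
    (hP : Collinear ℝ ({P, B, C} : Set Pt) ∧ (inner ℝ (S - P) (C - B) : ℝ) = 0)
    (hQ : Collinear ℝ ({Q, C, A} : Set Pt) ∧ (inner ℝ (S - Q) (A - C) : ℝ) = 0)
    (hR : Collinear ℝ ({R, A, B} : Set Pt) ∧ (inner ℝ (S - R) (B - A) : ℝ) = 0)
 :
    dist P Q = dist Q R ∧ dist Q R = dist R P := by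
  obtain ⟨h1, h2, h3, -⟩ := hS
  have hncol : ¬Collinear ℝ ({A, B, C} : Set Pt) :=
    affineIndependent_iff_not_collinear_set.1 hABC
  have hAB : A ≠ B := by
    rintro rfl
    exact hncol (by simpa [Set.insert_comm] using collinear_pair ℝ A C)
  have hAC : A ≠ C := by
    rintro rfl
    exact hncol (by simpa [Set.insert_comm, Set.pair_comm] using collinear_pair ℝ A B)
  have hBC : B ≠ C := by
    rintro rfl
    exact hncol (by simpa [Set.insert_comm] using collinear_pair ℝ A B)
  set cr : ℝ := (B 0 - A 0) * (C 1 - A 1) - (B 1 - A 1) * (C 0 - A 0) with hcr_def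
  have hcr : cr ≠ 0 := fun h => hncol (collinear_of_cross h)
  -- vertex A : feet R (on AB) and Q (on AC)
  have hQcolA : Collinear ℝ ({Q, A, C} : Set Pt) := by
    rw [Set.pair_comm A C]; exact hQ.1
  have hQperpA : ⟪S - Q, C - A⟫ = 0 := by
    rw [show (C - A : Pt) = -(A - C) by abel, inner_neg_right, hQ.2, neg_zero]
  have eA := pedal_side hAB hAC hR.1 hR.2 hQcolA hQperpA
  -- vertex B : feet P (on BC) and R (on BA)
  have hRcolB : Collinear ℝ ({R, B, A} : Set Pt) := by
    rw [Set.pair_comm B A]; exact hR.1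
  have hRperpB : ⟪S - R, A - B⟫ = 0 := by
    rw [show (A - B : Pt) = -(B - A) by abel, inner_neg_right, hR.2, neg_zero]
  have eB := pedal_side hBC (Ne.symm hAB) hP.1 hP.2 hRcolB hRperpB
  -- vertex C : feet P (on CB) and Q (on CA)
  have hPcolC : Collinear ℝ ({P, C, B} : Set Pt) := by
    rw [Set.pair_comm C B]; exact hP.1
  have hPperpC : ⟪S - P, B - C⟫ = 0 := by
    rw [show (B - C : Pt) = -(C - B) by abel, inner_neg_right, hP.2, neg_zero]
  have eC := pedal_side (Ne.symm hBC) (Ne.symm hAC) hPcolC hPperpC hQ.1 hQ.2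
  -- rewrite the gram factors as cr ^ 2
  have gA : dist A B ^ 2 * dist A C ^ 2 - ⟪B - A, C - A⟫ ^ 2 = cr ^ 2 := g_eq A B C
  have gB : dist B C ^ 2 * dist B A ^ 2 - ⟪C - B, A - B⟫ ^ 2 = cr ^ 2 := by
    rw [g_eq]; rw [hcr_def]; ring
  have gC : dist C B ^ 2 * dist C A ^ 2 - ⟪B - C, A - C⟫ ^ 2 = cr ^ 2 := by
    rw [g_eq]; rw [hcr_def]; ring
  rw [gA] at eA
  rw [gB] at eB
  rw [gC] at eC
  -- normalize distances
  rw [dist_comm R Q] at eA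
  rw [dist_comm B A] at eB
  rw [dist_comm C B, dist_comm C A] at eC
  have h2' : dist S A * dist B C = dist S C * dist A B := by rwa [dist_comm B A] at h2
  have h3' : dist S A * dist B C = dist S B * dist A C := by
    rwa [dist_comm C B, dist_comm C A] at h3
  -- eA : dist Q R ^ 2 * (dist A B ^ 2 * dist A C ^ 2) = dist S A ^ 2 * cr ^ 2
  -- eB : dist P R ^ 2 * (dist B C ^ 2 * dist A B ^ 2) = dist S B ^ 2 * cr ^ 2
  -- eC : dist P Q ^ 2 * (dist B C ^ 2 * dist A C ^ 2) = dist S C ^ 2 * cr ^ 2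
  have hABp : (0:ℝ) < dist A B := dist_pos.2 hAB
  have hACp : (0:ℝ) < dist A C := dist_pos.2 hAC
  have hBCp : (0:ℝ) < dist B C := dist_pos.2 hBC
  have hK : dist A B ^ 2 * dist A C ^ 2 * dist B C ^ 2 ≠ 0 := by positivity
  have key1 : dist P Q ^ 2 * (dist A B ^ 2 * dist A C ^ 2 * dist B C ^ 2) =
      dist Q R ^ 2 * (dist A B ^ 2 * dist A C ^ 2 * dist B C ^ 2) := by
    linear_combination (dist A B ^ 2) * eC - (dist B C ^ 2) * eA -
      cr ^ 2 * (dist S C * dist A B + dist S A * dist B C) * h2'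
  have key2 : dist Q R ^ 2 * (dist A B ^ 2 * dist A C ^ 2 * dist B C ^ 2) =
      dist R P ^ 2 * (dist A B ^ 2 * dist A C ^ 2 * dist B C ^ 2) := by
    rw [dist_comm R P]
    linear_combination (dist B C ^ 2) * eA - (dist A C ^ 2) * eB +
      cr ^ 2 * (dist S A * dist B C + dist S B * dist A C) * h3'
  have q1 : dist P Q ^ 2 = dist Q R ^ 2 := mul_right_cancel₀ hK key1
  have q2 : dist Q R ^ 2 = dist R P ^ 2 := mul_right_cancel₀ hK key2
  constructor
  · exact (sq_eq_sq₀ dist_nonneg dist_nonneg).1 q1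
  · exact (sq_eq_sq₀ dist_nonneg dist_nonneg).1 q2
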